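/- Let N ≥ 2, κ, γ, δ > 1, and let (c_{ij})_{i≠j} be a symmetric family of positive reals such that every vector C^i = (c_{ij})_{j≠i} is a permutation of a common vector c̄ ∈ (0,∞)^{N−1}. For each i let (α^i)* be the unique maximizer of the ALKY utility U(·; C^i) on [0,1)^{N−1}. Then the weight list α** defined by α**_{ij} = (α^i)*_j (well defined since (α^i)*_j = (α^j)*_i) maximizes the social objective O(α) = Σ_{i=1}^N U_i(α) over [0,1)^{n_N}: the decentralized individual optima coincide with the social optimum. -/
import Mathlib


/-- The ALKY utility function over an arbitrary finite index type, with
parameters κ, γ, δ and compatibility vector c, as a function of the weight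
vector α. -/
noncomputable def ALKY' {ι : Type*} [Fintype ι] (κ γ δ : ℝ) (c : ι → ℝ)
    (α : ι → ℝ) : ℝ :=
  (∑ j, (κ * α j * c j - α j ^ γ / (1 - α j ^ γ))) - (∑ j, α j) ^ δ

/-- ALKY utility of individual `i` given the compatibility matrix `c` and the
(symmetric) weight matrix `α`: sum over the other individuals j ≠ i. -/
noncomputable def Uind (N : ℕ) (κ γ δ : ℝ) (c : Fin N → Fin N → ℝ) (i : Fin N)
    (α : Fin N → Fin N → ℝ) : ℝ :=
  (∑ j ∈ Finset.univ.erase i, (κ * α i j * c i j - α i j ^ γ / (1 - α i j ^ γ)))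
    - (∑ j ∈ Finset.univ.erase i, α i j) ^ δ

/-- The social objective: the sum of the individual utilities. -/
noncomputable def socialObj (N : ℕ) (κ γ δ : ℝ) (c : Fin N → Fin N → ℝ)
    (α : Fin N → Fin N → ℝ) : ℝ :=
  ∑ i, Uind N κ γ δ c i α

/-- The feasible set of the Social Optimization Problem: symmetric weight
lists with zero diagonal, off-diagonal weights in [0,1), and no isolated
vertex (every individual has at least one strictly positive edge weight). -/
def WeightFeasible (N : ℕ) (α : Fin N → Fin N → ℝ) : Prop :=
  (∀ i j, α i j = α j i) ∧ (∀ i, α i i = 0) ∧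
  (∀ i j, i ≠ j → α i j ∈ Set.Ico (0:ℝ) 1) ∧
  (∀ i, ∃ j, j ≠ i ∧ 0 < α i j)


/-- Reindexing invariance of the ALKY utility. -/
lemma ALKY'_reindex {ι ι' : Type*} [Fintype ι] [Fintype ι'] (κ γ δ : ℝ) (c α : ι → ℝ)
    (e : ι' ≃ ι) :
    ALKY' κ γ δ (fun j => c (e j)) (fun j => α (e j)) = ALKY' κ γ δ c α := by
  unfold ALKY'
  rw [Equiv.sum_comp e (fun j => κ * α j * c j - α j ^ γ / (1 - α j ^ γ)),
      Equiv.sum_comp e α]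

/-- Invisible hand: if all the compatibility "columns" C^i = (c_{ij})_{j≠i}
are permutations of a common vector c̄, and (α^i)* is the unique maximizer of
the ALKY utility U(·; C^i) on [0,1)^{N−1}, then the weight list
α**_{ij} = (α^i)*_j is well defined (symmetric) and maximizes the social
objective O(α) = Σ_i U_i(α) over [0,1)^{n_N}. -/
theorem stmt_15 (N : ℕ) (hN : 2 ≤ N) (κ γ δ : ℝ) (hκ : 1 < κ) (hγ : 1 < γ) (hδ : 1 < δ)
    (c : Fin N → Fin N → ℝ) (hcs : ∀ i j, c i j = c j i)
    (hcpos : ∀ i j, i ≠ j → 0 < c i j)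
    (cbar : Fin (N - 1) → ℝ)
    (hperm : ∀ i : Fin N, ∃ e : {j : Fin N // j ≠ i} ≃ Fin (N - 1),
      ∀ j : {j : Fin N // j ≠ i}, c i j.val = cbar (e j))
    (αstar : (i : Fin N) → {j : Fin N // j ≠ i} → ℝ)
    (hmem : ∀ (i : Fin N) (j : {j : Fin N // j ≠ i}), αstar i j ∈ Set.Ico (0:ℝ) 1)
    (hmax : ∀ i : Fin N, ∀ β : {j : Fin N // j ≠ i} → ℝ,
      (∀ j, β j ∈ Set.Ico (0:ℝ) 1) → β ≠ αstar i →
      ALKY' κ γ δ (fun j : {j : Fin N // j ≠ i} => c i j.val) β <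
        ALKY' κ γ δ (fun j : {j : Fin N // j ≠ i} => c i j.val) (αstar i)) :
    (∀ (k m : Fin N) (h : k ≠ m), αstar k ⟨m, h.symm⟩ = αstar m ⟨k, h⟩) ∧
    (∀ β : Fin N → Fin N → ℝ, (∀ i j, β i j = β j i) → (∀ i, β i i = 0) →
      (∀ i j, i ≠ j → β i j ∈ Set.Ico (0:ℝ) 1) →
      socialObj N κ γ δ c β ≤
        socialObj N κ γ δ c
          (fun i j => if h : j ≠ i then αstar i ⟨j, h⟩ else 0)) := by

  -- abbreviations
  set F : (i : Fin N) → ({j : Fin N // j ≠ i} → ℝ) → ℝ :=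
    fun i β => ALKY' κ γ δ (fun j : {j : Fin N // j ≠ i} => c i j.val) β with hF
  -- non-strict version of hmax
  have hle : ∀ i : Fin N, ∀ β : {j : Fin N // j ≠ i} → ℝ,
      (∀ j, β j ∈ Set.Ico (0:ℝ) 1) → F i β ≤ F i (αstar i) := by
    intro i β hβ
    by_cases hb : β = αstar i
    · rw [hb]
    · exact (hmax i β hβ hb).le
  -- Lemma A: within one problem, equal compatibilities give equal optimal weights
  have hA : ∀ i : Fin N, ∀ j j' : {j : Fin N // j ≠ i},
      c i j.val = c i j'.val → αstar i j = αstar i j' := by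
    intro i j j' hc
    set σ : {t : Fin N // t ≠ i} ≃ {t : Fin N // t ≠ i} := Equiv.swap j j' with hσ
    have hcσ : ∀ t, c i ((σ t) : {t : Fin N // t ≠ i}).val = c i t.val := by
      intro t
      rcases eq_or_ne t j with rfl | h1
      · rw [hσ]; simp [Equiv.swap_apply_left, hc.symm]
      rcases eq_or_ne t j' with rfl | h2
      · rw [hσ]; simp [Equiv.swap_apply_right, hc]
      · rw [hσ, Equiv.swap_apply_of_ne_of_ne h1 h2]
    have hval : F i (fun t => αstar i (σ t)) = F i (αstar i) := by
      have h1 := ALKY'_reindex κ γ δ (fun t : {t : Fin N // t ≠ i} => c i t.val)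
        (αstar i) σ
      have h2 : (fun t : {t : Fin N // t ≠ i} => c i ((σ t) : {t : Fin N // t ≠ i}).val)
          = (fun t : {t : Fin N // t ≠ i} => c i t.val) := funext hcσ
      simp only [hF]
      rw [← h1, h2]
    have heq : (fun t => αstar i (σ t)) = αstar i := by
      by_contra hne
      exact (hmax i _ (fun t => hmem i (σ t)) hne).ne hval
    have := congrFun heq j
    rw [hσ] at this
    simpa [Equiv.swap_apply_left] using this.symm
  -- Lemma B: the optima of distinct problems are transports of one another
  have hB : ∀ k i : Fin N, ∃ E : {j : Fin N // j ≠ k} ≃ {j : Fin N // j ≠ i},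
      (∀ j, c i ((E j) : {j : Fin N // j ≠ i}).val = c k j.val) ∧
      αstar k = fun j => αstar i (E j) := by
    intro k i
    obtain ⟨ek, hek⟩ := hperm k
    obtain ⟨ei, hei⟩ := hperm i
    refine ⟨ek.trans ei.symm, ?_, ?_⟩
    · intro j
      have : c i ((ei.symm (ek j)) : {j : Fin N // j ≠ i}).val
          = cbar (ei (ei.symm (ek j))) := hei _
      rw [Equiv.apply_symm_apply] at this
      rw [Equiv.trans_apply, this, hek]
    · set E : {j : Fin N // j ≠ k} ≃ {j : Fin N // j ≠ i} := ek.trans ei.symm with hE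
      have hcE : ∀ j, c i ((E j) : {j : Fin N // j ≠ i}).val = c k j.val := by
        intro j
        have : c i ((ei.symm (ek j)) : {j : Fin N // j ≠ i}).val
            = cbar (ei (ei.symm (ek j))) := hei _
        rw [Equiv.apply_symm_apply] at this
        rw [hE, Equiv.trans_apply, this, hek]
      have hcE' : ∀ j, c k ((E.symm j) : {j : Fin N // j ≠ k}).val = c i j.val := by
        intro j
        have := hcE (E.symm j)
        rw [Equiv.apply_symm_apply] at this
        exact this.symm
      have hval1 : F k (fun j => αstar i (E j)) = F i (αstar i) := by
        have h1 := ALKY'_reindex κ γ δ (fun t : {j : Fin N // j ≠ i} => c i t.val)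
          (αstar i) E
        have h2 : (fun j : {j : Fin N // j ≠ k} => c i ((E j) : {j : Fin N // j ≠ i}).val)
            = (fun j : {j : Fin N // j ≠ k} => c k j.val) := funext hcE
        simp only [hF]
        rw [← h1, h2]
      have hval2 : F i (fun j => αstar k (E.symm j)) = F k (αstar k) := by
        have h1 := ALKY'_reindex κ γ δ (fun t : {j : Fin N // j ≠ k} => c k t.val)
          (αstar k) E.symm
        have h2 : (fun j : {j : Fin N // j ≠ i} => c k ((E.symm j) : {j : Fin N // j ≠ k}).val)
            = (fun j : {j : Fin N // j ≠ i} => c i j.val) := funext hcE'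
        simp only [hF]
        rw [← h1, h2]
      by_contra hne
      have hne' : (fun j => αstar i (E j)) ≠ αstar k := fun h => hne h.symm
      have hlt : F k (fun j => αstar i (E j)) < F k (αstar k) :=
        hmax k _ (fun j => hmem i (E j)) hne'
      have hchain : F k (αstar k) ≤ F i (αstar i) := by
        rw [← hval2]
        exact hle i _ (fun j => hmem k (E.symm j))
      rw [hval1] at hlt
      exact absurd (lt_of_le_of_lt hchain hlt) (lt_irrefl _)
  constructor
  · intro k m h
    obtain ⟨E, hcE, hαE⟩ := hB k m
    rw [congrFun hαE ⟨m, h.symm⟩]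
    refine hA m _ ⟨k, h⟩ ?_
    rw [hcE ⟨m, h.symm⟩]
    exact hcs k m
  · intro β hβs hβd hβmem
    have hUind : ∀ (α : Fin N → Fin N → ℝ) (i : Fin N),
        Uind N κ γ δ c i α = F i (fun j => α i j.val) := by
      intro α i
      unfold Uind
      rw [hF]
      unfold ALKY'
      have hs : ∀ x : Fin N, x ∈ Finset.univ.erase i ↔ x ≠ i := by
        intro x; simp [Finset.mem_erase]
      rw [Finset.sum_subtype _ hs (fun j => κ * α i j * c i j - α i j ^ γ / (1 - α i j ^ γ)),
          Finset.sum_subtype _ hs (fun j => α i j)]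
    unfold socialObj
    refine Finset.sum_le_sum (fun i _ => ?_)
    rw [hUind, hUind]
    have h2 : (fun j : {j : Fin N // j ≠ i} =>
        (fun i j => if h : j ≠ i then αstar i ⟨j, h⟩ else 0) i j.val) = αstar i := by
      funext j
      simp only [dif_pos j.prop]
    rw [h2]
    exact hle i _ (fun j => hβmem i j.val (Ne.symm j.prop))
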